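/- arXiv:2506.00423 — 4 statements merged into one kernel-verified Lean document; each statement's English description precedes it below -/
import Mathlib

section
/- Let n ≥ 1, let d₁ ≥ d₂ ≥ ⋯ ≥ dₙ be integers with dᵢ + d_{n+1−i} = 0 for every 1 ≤ i ≤ n, and set ω(u) = diag(u^{d₁}, …, u^{dₙ}) for u ∈ kˣ. Let φ : k → SL(n,k) be a map such that every matrix entry of φ(t) is a polynomial function of t, φ(t+t') = φ(t)·φ(t') for all t,t' ∈ k, φ(t) is an upper triangular matrix for every t ∈ k, and ω(u)·φ(t)·ω(u)⁻¹ = φ(u²·t) for all t ∈ k and u ∈ kˣ. Then for all indices 1 ≤ i ≤ j ≤ n the (i,j) entry a_{i,j}(t) of φ(t) is, as a polynomial in t, either identically zero or of the form λ·t^{(dᵢ−d_j)/2} with λ ∈ k, λ ≠ 0; in particular dᵢ − d_j is even whenever a_{i,j} is not identically zero. -/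
open Matrix

open Polynomial in
private lemma coeff_comp_C_mul_X {K : Type*} [Field K] (P : K[X]) (a : K) (m : ℕ) :
    (P.comp (C a * X)).coeff m = a ^ m * P.coeff m := by
  induction P using Polynomial.induction_on' with
  | add p q hp hq => simp [add_comp, hp, hq, mul_add]
  | monomial n c =>
      have : (monomial n c).comp (C a * X) = C (c * a ^ n) * X ^ n := by
        rw [monomial_comp, mul_pow, ← C_pow, ← mul_assoc, ← C_mul]
      rw [this, coeff_C_mul, coeff_X_pow, coeff_monomial]
      by_cases h : n = m
      · subst h; simp [mul_comm]
      · simp [h, Ne.symm h]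

/-- Let `d₁ ≥ ⋯ ≥ dₙ` be integers with `dᵢ + d_{n+1-i} = 0` and let
`ω(u) = diag(u^{d₁}, …, u^{dₙ})`.  If `φ : k → SL(n,k)` has polynomial entries, is additive,
upper triangular valued, and satisfies `ω(u)·φ(t)·ω(u)⁻¹ = φ(u²·t)`, then each entry
`a_{i,j}(t)` (for `i ≤ j`) is identically zero or a nonzero monomial `λ·t^δ`
with `dᵢ − d_j = 2·δ`. -/
theorem stmt3 {k : Type*} [Field k] [IsAlgClosed k] {p : ℕ} [Fact p.Prime] [CharP k p]
    {n : ℕ} (hn : 1 ≤ n) (d : Fin n → ℤ)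
    (hmono : ∀ i j : Fin n, i ≤ j → d j ≤ d i)
    (hanti : ∀ i : Fin n, d i + d i.rev = 0)
    (φ : k → SpecialLinearGroup (Fin n) k)
    (hpoly : ∀ i j : Fin n, ∃ P : Polynomial k, ∀ t : k, (φ t).1 i j = P.eval t)
    (hadd : ∀ t t' : k, φ (t + t') = φ t * φ t')
    (htri : ∀ (t : k) (i j : Fin n), j < i → (φ t).1 i j = 0)
    (hconj : ∀ (t : k) (u : kˣ),
      Matrix.diagonal (fun i => (u : k) ^ d i) * (φ t).1 *
          (Matrix.diagonal fun i => (u : k) ^ d i)⁻¹ =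
        (φ ((u : k) ^ 2 * t)).1) :
    ∀ i j : Fin n, i ≤ j →
      (∀ t : k, (φ t).1 i j = 0) ∨
        ∃ (lam : k) (δ : ℕ), lam ≠ 0 ∧ (∀ t : k, (φ t).1 i j = lam * t ^ δ) ∧
          d i - d j = 2 * (δ : ℤ) := by
  intro i j hij
  obtain ⟨P, hP⟩ := hpoly i j
  have he : (0:ℤ) ≤ d i - d j := by linarith [hmono i j hij]
  set E : ℕ := (d i - d j).toNat with hE
  have hEe : (E : ℤ) = d i - d j := Int.toNat_of_nonneg he
  -- key scaling identity
  have key : ∀ x : k, x ≠ 0 → ∀ t : k, P.eval (x ^ 2 * t) = x ^ E * P.eval t := by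
    intro x hx t
    set u : kˣ := Units.mk0 x hx with hu
    have hux : (u : k) = x := rfl
    have hc := hconj t u
    have hdet : IsUnit (Matrix.diagonal (fun i => (u:k) ^ d i)).det := by
      rw [Matrix.det_diagonal]
      refine isUnit_iff_ne_zero.2 (Finset.prod_ne_zero_iff.2 fun i _ => ?_)
      exact zpow_ne_zero _ (by simpa [hux] using hx)
    have hc2 : Matrix.diagonal (fun i => (u:k) ^ d i) * (φ t).1 =
        (φ ((u:k) ^ 2 * t)).1 * Matrix.diagonal (fun i => (u:k) ^ d i) := by
      have h1 := congrArg (fun A => A * Matrix.diagonal fun i => (u:k) ^ d i) hc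
      simpa [mul_assoc, Matrix.nonsing_inv_mul _ hdet] using h1
    have hentry := congrFun (congrFun hc2 i) j
    rw [Matrix.diagonal_mul, Matrix.mul_diagonal, hux, hP, hP] at hentry
    -- hentry : x ^ d i * P.eval t = P.eval (x ^ 2 * t) * x ^ d j
    have hxj : x ^ (d j) ≠ 0 := zpow_ne_zero _ hx
    have h3 : P.eval (x ^ 2 * t) = x ^ (d i) * P.eval t / x ^ (d j) :=
      (eq_div_iff hxj).2 hentry.symm
    have hdd : x ^ (d i) / x ^ (d j) = x ^ E := by
      rw [← zpow_sub₀ hx, ← hEe, zpow_natCast]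
    calc P.eval (x ^ 2 * t) = x ^ (d i) * P.eval t / x ^ (d j) := h3
      _ = P.eval t * (x ^ (d i) / x ^ (d j)) := by ring
      _ = x ^ E * P.eval t := by rw [hdd]; ring
  have hcoeff : ∀ m : ℕ, P.coeff m ≠ 0 → 2 * m = E := by
    intro m hm
    by_contra hne
    have hpow : ∀ x : k, x ≠ 0 → x ^ (2 * m) = x ^ E := by
      intro x hx
      have hpoly_eq : P.comp (Polynomial.C (x ^ 2) * Polynomial.X) =
          Polynomial.C (x ^ E) * P := by
        apply Polynomial.funext
        intro t
        rw [Polynomial.eval_comp]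
        simp [key x hx t]
      have hcm := congrArg (fun Q => Q.coeff m) hpoly_eq
      simp only [coeff_comp_C_mul_X, Polynomial.coeff_C_mul] at hcm
      have := mul_right_cancel₀ hm hcm
      rwa [← pow_mul] at this
    set Q : Polynomial k := Polynomial.X ^ (2 * m) - Polynomial.X ^ E with hQ
    have hQ0 : Q = 0 := by
      apply Polynomial.eq_zero_of_infinite_isRoot
      apply Set.Infinite.mono (s := {x : k | x ≠ 0})
      · intro x hx
        simp only [Set.mem_setOf_eq, Polynomial.IsRoot, hQ, Polynomial.eval_sub,
          Polynomial.eval_pow, Polynomial.eval_X]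
        rw [hpow x hx, sub_self]
      · simpa [Set.compl_def] using (Set.finite_singleton (0:k)).infinite_compl
    have : Q.coeff (2 * m) = 1 := by
      simp [hQ, Polynomial.coeff_X_pow, hne]
    rw [hQ0] at this
    simp at this
  by_cases h0 : ∀ t : k, (φ t).1 i j = 0
  · exact Or.inl h0
  · right
    have hPne : P ≠ 0 := by
      intro h
      exact h0 (fun t => by rw [hP, h, Polynomial.eval_zero])
    have hex : ∃ δ : ℕ, P.coeff δ ≠ 0 := by
      by_contra h
      push_neg at h
      exact hPne (Polynomial.ext fun m => by simp [h m])
    obtain ⟨δ, hδ⟩ := hex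
    refine ⟨P.coeff δ, δ, hδ, ?_, ?_⟩
    · intro t
      rw [hP]
      have hPeq : P = Polynomial.C (P.coeff δ) * Polynomial.X ^ δ := by
        ext m
        rw [Polynomial.coeff_C_mul, Polynomial.coeff_X_pow]
        by_cases hm : m = δ
        · subst hm; simp
        · rw [if_neg hm, mul_zero]
          by_contra hc
          exact hm (by have h1 := hcoeff m hc; have h2 := hcoeff δ hδ; omega)
      rw [hPeq]
      simp
    · have h2 := hcoeff δ hδ
      rw [← hEe]
      exact_mod_cast h2.symm
end

section
/- Assume p ≥ 5. Let e ≥ 0 be an integer, q = p^e, and define φ*(t) = [[1, t^q, (1/2)t^{2q}, (1/6)t^{3q}], [0, 1, t^q, (1/2)t^{2q}], [0, 0, 1, t^q], [0, 0, 0, 1]] for t ∈ k and ω*(u) = diag(u^{3q}, u^{q}, u^{−q}, u^{−3q}) for u ∈ kˣ. Suppose φ⁻ : k → SL(4,k) satisfies: φ⁻(s+s') = φ⁻(s)·φ⁻(s') for all s,s' ∈ k; every matrix entry of φ⁻(s) is a polynomial function of s; φ⁻(s) is lower triangular for every s ∈ k; and φ*(t)·φ⁻(s) = φ⁻(s/(1+t·s))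 · ω*(1+t·s) · φ*(t/(1+t·s)) for all t,s ∈ k with 1+t·s ≠ 0. Then φ⁻(s) = [[1,0,0,0], [3s^q, 1, 0, 0], [6s^{2q}, 4s^q, 1, 0], [6s^{3q}, 6s^{2q}, 3s^q, 1]] for every s ∈ k. -/
open Matrix

/-- The unipotent one-parameter subgroup `φ*` of form (I). -/
noncomputable def phiStarI (k : Type*) [Field k] (q : ℕ) (t : k) : Matrix (Fin 4) (Fin 4) k :=
  !![1, t ^ q, (1 / 2 : k) * t ^ (2 * q), (1 / 6 : k) * t ^ (3 * q);
     0, 1, t ^ q, (1 / 2 : k) * t ^ (2 * q);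
     0, 0, 1, t ^ q;
     0, 0, 0, 1]

/-- The cocharacter `ω*(u) = diag(u^{3q}, u^{q}, u^{−q}, u^{−3q})` of form (I). -/
noncomputable def omegaStarI (k : Type*) [Field k] (q : ℕ) (u : kˣ) :
    Matrix (Fin 4) (Fin 4) k :=
  Matrix.diagonal
    ![(u : k) ^ (3 * q : ℤ), (u : k) ^ (q : ℤ), (u : k) ^ (-(q : ℤ)), (u : k) ^ (-(3 * q : ℤ))]

open Polynomial in
lemma aux_poly {k : Type*} [Field k] [IsAlgClosed k] (q : ℕ) (hq : q ≠ 0) (s A B C : k)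
    (h : ∀ t : k, 1 + t * s ≠ 0 → A * t ^ q + B * t ^ (2 * q) + C * t ^ (3 * q) = 0) :
    A = 0 ∧ B = 0 ∧ C = 0 := by
  set P : Polynomial k :=
    Polynomial.C A * X ^ q + Polynomial.C B * X ^ (2 * q) + Polynomial.C C * X ^ (3 * q) with hPdef
  have hset : {t : k | 1 + t * s ≠ 0}.Infinite := by
    have hfin : {t : k | ¬ (1 + t * s ≠ 0)}.Finite := by
      apply Set.Finite.subset (Set.finite_singleton (-s⁻¹))
      intro t ht
      simp only [Set.mem_setOf_eq, not_not] at ht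
      have hs : s ≠ 0 := by rintro rfl; simp at ht
      simp only [Set.mem_singleton_iff]
      field_simp
      linear_combination ht
    have := Set.Finite.infinite_compl hfin
    simpa only [Set.compl_setOf, not_not] using this
  have hP0 : P = 0 := by
    apply Polynomial.eq_zero_of_infinite_isRoot
    refine hset.mono fun t ht => ?_
    simp only [Set.mem_setOf_eq, IsRoot.def, hPdef, eval_add, eval_mul, eval_C, eval_pow, eval_X]
    exact h t ht
  have cA : P.coeff q = A := by
    simp only [hPdef, coeff_add, coeff_C_mul, coeff_X_pow]
    simp [(show ¬ q = 2*q by omega), (show ¬ q = 3*q by omega)]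
  have cB : P.coeff (2 * q) = B := by
    simp only [hPdef, coeff_add, coeff_C_mul, coeff_X_pow]
    simp [(show ¬ 2*q = q by omega), (show ¬ 2*q = 3*q by omega)]
  have cC : P.coeff (3 * q) = C := by
    simp only [hPdef, coeff_add, coeff_C_mul, coeff_X_pow]
    simp [(show ¬ 3*q = q by omega), (show ¬ 3*q = 2*q by omega)]
  rw [hP0] at cA cB cC
  simp only [coeff_zero] at cA cB cC
  exact ⟨cA.symm, cB.symm, cC.symm⟩

/-- **form (I).** If `p ≥ 5` and `φ⁻ : k → SL(4,k)` is an additive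
lower-triangular one-parameter subgroup with polynomial entries satisfying the opposite
Bruhat relation against `φ*` and `ω*` of form (I), then `φ⁻` is the explicit lower
unipotent subgroup displayed below. -/
theorem stmt5 {k : Type*} [Field k] [IsAlgClosed k] {p : ℕ} [Fact p.Prime] [CharP k p]
    (hp : 5 ≤ p) (e : ℕ)
    (φm : k → SpecialLinearGroup (Fin 4) k)
    (hadd : ∀ s s' : k, φm (s + s') = φm s * φm s')
    (hpoly : ∀ i j : Fin 4, ∃ P : Polynomial k, ∀ s : k, (φm s).1 i j = P.eval s)
    (htri : ∀ (s : k) (i j : Fin 4), i < j → (φm s).1 i j = 0)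
    (hrel : ∀ (t s : k) (h : 1 + t * s ≠ 0),
      phiStarI k (p ^ e) t * (φm s).1 =
        (φm (s / (1 + t * s))).1 * omegaStarI k (p ^ e) (Units.mk0 (1 + t * s) h) *
          phiStarI k (p ^ e) (t / (1 + t * s))) :
    ∀ s : k, (φm s).1 =
      !![1, 0, 0, 0;
         (3 : k) * s ^ p ^ e, 1, 0, 0;
         (6 : k) * s ^ (2 * p ^ e), (4 : k) * s ^ p ^ e, 1, 0;
         (6 : k) * s ^ (3 * p ^ e), (6 : k) * s ^ (2 * p ^ e), (3 : k) * s ^ p ^ e, 1] := by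
  have hppos : 0 < p := by omega
  have hq : p ^ e ≠ 0 := pow_ne_zero e (by omega)
  have h2 : (2 : k) ≠ 0 := by
    intro h
    rw [show (2:k) = ((2:ℕ):k) by norm_num, CharP.cast_eq_zero_iff k p] at h
    have := Nat.le_of_dvd (by norm_num) h
    omega
  have h6 : (6 : k) ≠ 0 := by
    intro h
    rw [show (6:k) = ((6:ℕ):k) by norm_num, CharP.cast_eq_zero_iff k p] at h
    have hle := Nat.le_of_dvd (by norm_num) h
    have hp' := Fact.out (p := p.Prime)
    interval_cases p
    · omega
    · norm_num at hp'
  -- φm 0 = 1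
  have h0 : φm 0 = 1 := by
    have h := hadd 0 0
    rw [add_zero] at h
    have h' : φm 0 * 1 = φm 0 * φm 0 := by rw [mul_one]; exact h
    exact (mul_left_cancel h').symm
  -- diagonal entries are 1
  have hdiag : ∀ (i : Fin 4) (s : k), (φm s).1 i i = 1 := by
    intro i
    have hmul : ∀ s s' : k, (φm (s + s')).1 i i = (φm s).1 i i * (φm s').1 i i := by
      intro s s'
      rw [hadd, Matrix.SpecialLinearGroup.coe_mul, Matrix.mul_apply]
      rw [Finset.sum_eq_single i]
      · intro j _ hj
        rcases lt_or_gt_of_ne hj with hlt | hgt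
        · rw [htri s' j i hlt, mul_zero]
        · rw [htri s i j hgt, zero_mul]
      · intro h; exact absurd (Finset.mem_univ i) h
    have hone : (φm 0).1 i i = 1 := by
      rw [h0]; simp [Matrix.SpecialLinearGroup.coe_one, Matrix.one_apply]
    intro s
    obtain ⟨P, hP⟩ := hpoly i i
    have hne : ∀ x : k, P.eval x ≠ 0 := by
      intro x hzero
      have h1 : P.eval x * P.eval (-x) = 1 := by
        rw [← hP, ← hP, ← hmul, add_neg_cancel, hone]
      rw [hzero, zero_mul] at h1
      exact zero_ne_one h1
    have hdeg : P.degree ≤ 0 := by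
      by_contra hd
      push_neg at hd
      obtain ⟨x, hx⟩ := IsAlgClosed.exists_root P hd.ne'
      exact hne x hx
    have hPc := Polynomial.degree_le_zero_iff.mp hdeg
    have hconst : P.eval s = P.eval 0 := by rw [hPc]; simp
    rw [hP s, hconst, ← hP 0, hone]
  intro s
  set q : ℕ := p ^ e with hqdef
  -- utility: frobenius
  have hfrob : ∀ t : k, (1 + t * s) ^ q = 1 + t ^ q * s ^ q := by
    intro t
    rw [hqdef, add_pow_char_pow, one_pow, mul_pow]
  -- the three polynomial identities
  have E0 := aux_poly q hq s ((φm s).1 1 0 - 3 * s ^ q)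
      ((1/2) * (φm s).1 2 0 - 3 * (s ^ q) ^ 2) ((1/6) * (φm s).1 3 0 - (s ^ q) ^ 3) ?e0
  have E1 := aux_poly q hq s 0
      ((1/2) * (φm s).1 2 1 - 2 * s ^ q) ((1/6) * (φm s).1 3 1 - (s ^ q) ^ 2) ?e1
  have E2 := aux_poly q hq s 0 0 ((1/6) * (φm s).1 3 2 - (1/2) * s ^ q) ?e2
  case e0 =>
    intro t h
    have H := congrFun (congrFun (hrel t s h) 0) 0
    have d0 := hdiag 0 s
    have d0' := hdiag 0 (s / (1 + t * s))
    have z1 := htri (s / (1 + t * s)) 0 1 (by decide)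
    have z2 := htri (s / (1 + t * s)) 0 2 (by decide)
    have z3 := htri (s / (1 + t * s)) 0 3 (by decide)
    simp [phiStarI, omegaStarI, Matrix.mul_apply, Fin.sum_univ_four, d0, d0', z1, z2, z3,
      Units.val_mk0] at H
    rw [show ((3:ℤ) * (q:ℤ)) = ((3*q:ℕ):ℤ) by push_cast; ring, zpow_natCast,
      show (1+t*s)^(3*q) = ((1+t*s)^q)^3 from pow_mul' _ 3 q, hfrob] at H
    linear_combination H
  case e1 =>
    intro t h
    have H := congrFun (congrFun (hrel t s h) 0) 1
    have d0' := hdiag 0 (s / (1 + t * s))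
    have d1 := hdiag 1 s
    have y1 := htri s 0 1 (by decide)
    have z1 := htri (s / (1 + t * s)) 0 1 (by decide)
    have z2 := htri (s / (1 + t * s)) 0 2 (by decide)
    have z3 := htri (s / (1 + t * s)) 0 3 (by decide)
    simp [phiStarI, omegaStarI, Matrix.mul_apply, Fin.sum_univ_four, d0', d1, y1, z1, z2, z3,
      Units.val_mk0] at H
    rw [show ((3:ℤ) * (q:ℤ)) = ((3*q:ℕ):ℤ) by push_cast; ring, zpow_natCast] at H
    have hr1 : (1 + t * s) ^ (3*q) * (t / (1 + t * s)) ^ q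
        = (1 + t ^ q * s ^ q) ^ 2 * t ^ q := by
      rw [← hfrob, div_pow]
      have hpow : (1 + t * s) ^ q ≠ 0 := pow_ne_zero _ h
      field_simp
      ring
    linear_combination H + hr1
  case e2 =>
    intro t h
    have H := congrFun (congrFun (hrel t s h) 0) 2
    have d0' := hdiag 0 (s / (1 + t * s))
    have d2 := hdiag 2 s
    have y1 := htri s 0 2 (by decide)
    have y2 := htri s 1 2 (by decide)
    have z1 := htri (s / (1 + t * s)) 0 1 (by decide)
    have z2 := htri (s / (1 + t * s)) 0 2 (by decide)
    have z3 := htri (s / (1 + t * s)) 0 3 (by decide)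
    simp [phiStarI, omegaStarI, Matrix.mul_apply, Fin.sum_univ_four, d0', d2, y1, y2, z1, z2, z3,
      Units.val_mk0] at H
    rw [show ((3:ℤ) * (q:ℤ)) = ((3*q:ℕ):ℤ) by push_cast; ring, zpow_natCast] at H
    have hr2 : (1 + t * s) ^ (3*q) * (t / (1 + t * s)) ^ (2*q)
        = (1 + t ^ q * s ^ q) * t ^ (2*q) := by
      rw [← hfrob, div_pow]
      have hpow : (1 + t * s) ^ q ≠ 0 := pow_ne_zero _ h
      field_simp
      ring
    linear_combination H + (1/2) * hr2
  obtain ⟨hA0, hB0, hC0⟩ := E0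
  obtain ⟨-, hB1, hC1⟩ := E1
  obtain ⟨-, -, hC2⟩ := E2
  ext i j
  fin_cases i <;> fin_cases j
  · simpa using hdiag 0 s
  · simpa using htri s 0 1 (by decide)
  · simpa using htri s 0 2 (by decide)
  · simpa using htri s 0 3 (by decide)
  · show (φm s).1 1 0 = 3 * s ^ p ^ e
    rw [← hqdef]; linear_combination hA0
  · simpa using hdiag 1 s
  · simpa using htri s 1 2 (by decide)
  · simpa using htri s 1 3 (by decide)
  · show (φm s).1 2 0 = 6 * s ^ (2 * p ^ e)
    rw [← hqdef]
    rw [sub_eq_zero, one_div, inv_mul_eq_div, div_eq_iff h2] at hB0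
    rw [show 2 * q = q * 2 by ring, pow_mul, hB0]; ring
  · show (φm s).1 2 1 = 4 * s ^ p ^ e
    rw [← hqdef]
    rw [sub_eq_zero, one_div, inv_mul_eq_div, div_eq_iff h2] at hB1
    rw [hB1]; ring
  · simpa using hdiag 2 s
  · simpa using htri s 2 3 (by decide)
  · show (φm s).1 3 0 = 6 * s ^ (3 * p ^ e)
    rw [← hqdef]
    rw [sub_eq_zero, one_div, inv_mul_eq_div, div_eq_iff h6] at hC0
    rw [show 3 * q = q * 3 by ring, pow_mul, hC0]; ring
  · show (φm s).1 3 1 = 6 * s ^ (2 * p ^ e)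
    rw [← hqdef]
    rw [sub_eq_zero, one_div, inv_mul_eq_div, div_eq_iff h6] at hC1
    rw [show 2 * q = q * 2 by ring, pow_mul, hC1]; ring
  · show (φm s).1 3 2 = 3 * s ^ p ^ e
    rw [← hqdef]
    rw [sub_eq_zero, one_div, inv_mul_eq_div, div_eq_iff h6] at hC2
    have h62 : (6:k) * (1 / 2) = 3 := by
      rw [mul_one_div, div_eq_iff h2]; norm_num
    rw [hC2, mul_comm, ← mul_assoc, h62]
  · simpa using hdiag 3 s
end

section
/- Let e ≥ 0 and f ≥ e+1 be integers, q = p^e, and define φ*(t) = [[1, t^q, 0, t^{p^f}], [0, 1, 0, 0], [0, 0, 1, t^q], [0, 0, 0, 1]] for t ∈ k and ω*(u) = diag(u^{p^f}, u^{p^f − 2q}, u^{2q − p^f}, u^{−p^f}) for u ∈ kˣ. Suppose φ⁻ : k → SL(4,k) satisfies: φ⁻(s+s') = φ⁻(s)·φ⁻(s') for all s,s' ∈ k; every matrix entry of φ⁻(s) is a polynomial function of s; φ⁻(s) is lower triangular for every s ∈ k; and φ*(t)·φ⁻(s) = φ⁻(s/(1+t·s)) · ω*(1+t·s) · φ*(t/(1+t·s))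 for all t,s ∈ k with 1+t·s ≠ 0. Then p = 2, f = e+1, and φ⁻(s) = [[1,0,0,0], [0,1,0,0], [s^q, 0, 1, 0], [s^{2q}, s^q, 0, 1]] for every s ∈ k. -/
open Matrix

/-- The unipotent one-parameter subgroup `φ*` of form (V), with `q = p^e`, `qf = p^f`. -/
noncomputable def phiStarV (k : Type*) [Field k] (q qf : ℕ) (t : k) :
    Matrix (Fin 4) (Fin 4) k :=
  !![1, t ^ q, 0, t ^ qf;
     0, 1, 0, 0;
     0, 0, 1, t ^ q;
     0, 0, 0, 1]

/-- The cocharacter `ω*(u) = diag(u^{p^f}, u^{p^f−2q}, u^{2q−p^f}, u^{−p^f})` of form (V). -/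
noncomputable def omegaStarV (k : Type*) [Field k] (q qf : ℕ) (u : kˣ) :
    Matrix (Fin 4) (Fin 4) k :=
  Matrix.diagonal
    ![(u : k) ^ (qf : ℤ), (u : k) ^ ((qf : ℤ) - 2 * (q : ℤ)),
      (u : k) ^ (2 * (q : ℤ) - (qf : ℤ)), (u : k) ^ (-(qf : ℤ))]

/-- **form (V).** If `φ⁻` is an additive lower-triangular one-parameter
subgroup of `SL(4,k)` with polynomial entries satisfying the opposite Bruhat relation
against `φ*`, `ω*` of form (V) (with `f ≥ e+1`), then `p = 2`, `f = e+1`, and `φ⁻` has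
the displayed explicit form. -/
theorem stmt7 {k : Type*} [Field k] [IsAlgClosed k] {p : ℕ} [Fact p.Prime] [CharP k p]
    (e f : ℕ) (hef : e + 1 ≤ f)
    (φm : k → SpecialLinearGroup (Fin 4) k)
    (hadd : ∀ s s' : k, φm (s + s') = φm s * φm s')
    (hpoly : ∀ i j : Fin 4, ∃ P : Polynomial k, ∀ s : k, (φm s).1 i j = P.eval s)
    (htri : ∀ (s : k) (i j : Fin 4), i < j → (φm s).1 i j = 0)
    (hrel : ∀ (t s : k) (h : 1 + t * s ≠ 0),
      phiStarV k (p ^ e) (p ^ f) t * (φm s).1 =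
        (φm (s / (1 + t * s))).1 * omegaStarV k (p ^ e) (p ^ f) (Units.mk0 (1 + t * s) h) *
          phiStarV k (p ^ e) (p ^ f) (t / (1 + t * s))) :
    p = 2 ∧ f = e + 1 ∧
      ∀ s : k, (φm s).1 =
        !![1, 0, 0, 0;
           0, 1, 0, 0;
           s ^ p ^ e, 0, 1, 0;
           s ^ (2 * p ^ e), s ^ p ^ e, 0, 1] := by
  classical
  have hp : p.Prime := Fact.out
  have hp0 : (p : ℕ) ≠ 0 := hp.ne_zero
  -- pick elements avoiding two values
  have hne : ∀ a b : k, ∃ t : k, t ≠ a ∧ t ≠ b := by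
    intro a b
    obtain ⟨t, ht⟩ := Infinite.exists_notMem_finset ({a, b} : Finset k)
    simp at ht
    exact ⟨t, ht.1, ht.2⟩
  -- φm 0 = 1
  have hφ0 : φm 0 = 1 := by
    have h00 : φm 0 * 1 = φm 0 * φm 0 := by
      rw [mul_one]; simpa using (hadd 0 0).symm
    exact (mul_left_cancel h00).symm
  -- diagonal entries are nonzero
  have hdiagne : ∀ (s : k) (i : Fin 4), (φm s).1 i i ≠ 0 := by
    intro s i
    have h1 : ((φm s).1).det = 1 := (φm s).2
    have hbt : ((φm s).1)ᵀ.BlockTriangular id := fun a b hab => htri s b a hab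
    rw [← Matrix.det_transpose, Matrix.det_of_upperTriangular hbt] at h1
    intro hz
    have h0 : (1 : k) = 0 := by
      rw [← h1]; exact Finset.prod_eq_zero (Finset.mem_univ i) hz
    exact one_ne_zero h0
  -- diagonal entries equal 1
  have hdiag : ∀ (s : k) (i : Fin 4), (φm s).1 i i = 1 := by
    intro s i
    obtain ⟨P, hP⟩ := hpoly i i
    have hPne : ∀ x : k, P.eval x ≠ 0 := by
      intro x; rw [← hP x]; exact hdiagne x i
    have hdeg : P.degree = 0 := by
      by_contra hd
      obtain ⟨x, hx⟩ := IsAlgClosed.exists_root P hd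
      exact hPne x hx
    have hC := Polynomial.eq_C_of_degree_le_zero hdeg.le
    have hconst : ∀ x : k, (φm x).1 i i = P.coeff 0 := by
      intro x; rw [hP x, hC]; simp
    have h0 : (φm 0).1 i i = 1 := by rw [hφ0]; simp
    rw [hconst s, ← hconst 0, h0]
  -- reachability: any r is s/(1+ts) for suitable t ≠ 0, s
  have reach : ∀ r : k, ∃ t s : k, t ≠ 0 ∧ 1 + t * s ≠ 0 ∧ s / (1 + t * s) = r := by
    intro r
    obtain ⟨t, ht0, htr⟩ := hne 0 r⁻¹
    have h1 : 1 - t * r ≠ 0 := by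
      intro h
      have htr1 : t * r = 1 := (sub_eq_zero.mp h).symm
      exact htr (eq_inv_of_mul_eq_one_left htr1)
    have hv : 1 + t * (r / (1 - t * r)) = (1 - t * r)⁻¹ := by
      field_simp
      ring
    refine ⟨t, r / (1 - t * r), ht0, ?_, ?_⟩
    · rw [hv]; exact inv_ne_zero h1
    · rw [hv, div_inv_eq_mul, div_mul_cancel₀ _ h1]
  -- b ≡ 0
  have hb : ∀ r : k, (φm r).1 1 0 = 0 := by
    intro r
    obtain ⟨t, s, ht0, hv, hr⟩ := reach r
    have H13 := congrFun (congrFun (hrel t s hv) 1) 3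
    simp [phiStarV, omegaStarV, Matrix.mul_apply, Fin.sum_univ_four,
      Matrix.diagonal_apply, htri, hr] at H13
    rcases H13 with (h | h) | h
    · exact h
    · exact absurd h (zpow_ne_zero _ hv)
    · rcases h.1 with h' | h'
      · exact absurd h' ht0
      · exact absurd h' hv
  have hz1 : ∀ v : k, v ≠ 0 → v ^ ((p:ℤ)^f - 2*(p:ℤ)^e) = 1 := by
    intro v hv
    have hvrel : 1 + (v-1)*1 ≠ 0 := by simpa using hv
    have H11 := congrFun (congrFun (hrel (v-1) 1 hvrel) 1) 1
    simp [phiStarV, omegaStarV, Matrix.mul_apply, Fin.sum_univ_four, Matrix.diagonal_apply, htri, hb, hdiag] at H11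
    exact H11.symm
  have hge : 2 * p ^ e ≤ p ^ f := by
    calc 2 * p ^ e ≤ p * p ^ e := Nat.mul_le_mul_right _ hp.two_le
    _ = p ^ (e + 1) := by ring
    _ ≤ p ^ f := Nat.pow_le_pow_right hp.one_lt.le hef
  have hQ : p ^ f = 2 * p ^ e := by
    by_contra hQne
    have hlt : 2 * p ^ e < p ^ f := lt_of_le_of_ne hge (Ne.symm hQne)
    set n := p ^ f - 2 * p ^ e with hn
    have hnpos : 0 < n := Nat.sub_pos_of_lt hlt
    have hall : ∀ v : k, v ≠ 0 → v ^ n = 1 := by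
      intro v hv
      have h := hz1 v hv
      rw [show ((p:ℤ)^f - 2*(p:ℤ)^e) = (n:ℤ) by
        rw [hn]; push_cast [Nat.cast_sub hge]; ring] at h
      rw [zpow_natCast] at h
      exact h
    obtain ⟨c, hc0, hc1⟩ := hne (0:k) 1
    obtain ⟨x, hx⟩ := IsAlgClosed.exists_root (Polynomial.X ^ n - Polynomial.C c) (by
      rw [Polynomial.degree_X_pow_sub_C hnpos]
      exact_mod_cast hnpos.ne')
    have hxn : x ^ n = c := by
      have := hx
      simp [Polynomial.IsRoot, sub_eq_zero] at this
      exact this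
    have hx0 : x ≠ 0 := by
      rintro rfl
      rw [zero_pow hnpos.ne'] at hxn
      exact hc0 hxn.symm
    have := hall x hx0
    rw [hxn] at this
    exact hc1 this
  have hpfe : p ^ (f - e) = 2 := by
    have hsplit : p ^ (f - e) * p ^ e = 2 * p ^ e := by
      rw [← pow_add]
      rw [show f - e + e = f by omega]
      exact hQ
    exact Nat.eq_of_mul_eq_mul_right (pow_pos hp.pos e) hsplit
  have hp2 : p = 2 := by
    have hpd : p ∣ 2 := by
      rw [← hpfe]
      exact dvd_pow_self p (by omega)
    exact (Nat.prime_dvd_prime_iff_eq hp Nat.prime_two).mp hpd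
  have hf : f = e + 1 := by
    rw [hp2] at hpfe
    have hfe1 : f - e = 1 := by
      by_contra hne1
      have h2le : 2 ≤ f - e := by omega
      have hh : 2 ^ 2 ≤ 2 ^ (f - e) := Nat.pow_le_pow_right (by norm_num) h2le
      rw [hpfe] at hh
      norm_num at hh
    omega
  subst hp2
  subst hf
  have hfrob : ∀ (n : ℕ) (a b : k), (a + b) ^ (2:ℕ) ^ n = a ^ (2:ℕ) ^ n + b ^ (2:ℕ) ^ n := by
    intro n a b
    exact add_pow_char_pow a b 2 n
  have hzp : ∀ (v : k) (n : ℕ), v ^ ((2:ℤ) ^ n) = v ^ ((2:ℕ) ^ n) := by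
    intro v n
    rw [show ((2:ℤ) ^ n) = (((2:ℕ) ^ n : ℕ) : ℤ) by push_cast; ring, zpow_natCast]
  have pick : ∀ s : k, ∃ t : k, t ≠ 0 ∧ 1 + t * s ≠ 0 := by
    intro s
    obtain ⟨t, ht0, hts⟩ := hne 0 (-s⁻¹)
    refine ⟨t, ht0, ?_⟩
    intro h
    have hs0 : s ≠ 0 := by rintro rfl; simp at h
    apply hts
    field_simp
    linear_combination h
  have hm : ∀ s : k, (φm s).1 3 2 = 0 := by
    intro s
    obtain ⟨t, ht0, hv⟩ := pick s
    have H02 := congrFun (congrFun (hrel t s hv) 0) 2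
    simp [phiStarV, omegaStarV, Matrix.mul_apply, Fin.sum_univ_four,
      Matrix.diagonal_apply, htri, hb, hdiag] at H02
    rcases H02 with h | h
    · exact absurd h ht0
    · exact h
  have hg : ∀ s : k, (φm s).1 3 0 = s ^ (2:ℕ) ^ (e+1) := by
    intro s
    obtain ⟨t, ht0, hv⟩ := pick s
    have H00 := congrFun (congrFun (hrel t s hv) 0) 0
    simp [phiStarV, omegaStarV, Matrix.mul_apply, Fin.sum_univ_four,
      Matrix.diagonal_apply, htri, hb, hdiag] at H00
    have hF := hfrob (e+1) 1 (t*s)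
    rw [one_pow] at hF
    rw [hzp] at H00
    rw [hF, mul_pow] at H00
    exact mul_left_cancel₀ (pow_ne_zero _ ht0) (add_left_cancel H00)
  have hexp : ∀ x : k, x ^ (2:ℕ) ^ (e+1) = (x ^ (2:ℕ) ^ e) ^ 2 := by
    intro x; rw [pow_succ, pow_mul]
  have hvq : ∀ t s : k, (1 + t * s) ^ (2:ℕ) ^ e = 1 + t ^ (2:ℕ) ^ e * s ^ (2:ℕ) ^ e := by
    intro t s; rw [hfrob e 1 (t*s), one_pow, mul_pow]
  have hh : ∀ s : k, (φm s).1 3 1 = s ^ (2:ℕ) ^ e := by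
    intro s
    obtain ⟨t, ht0, hv⟩ := pick s
    have H01 := congrFun (congrFun (hrel t s hv) 0) 1
    simp [phiStarV, omegaStarV, Matrix.mul_apply, Fin.sum_univ_four,
      Matrix.diagonal_apply, htri, hb, hdiag] at H01
    rw [hzp, div_pow, hexp (1+t*s), hexp t, hvq] at H01
    have hvqne : ((1:k) + t ^ (2:ℕ) ^ e * s ^ (2:ℕ) ^ e) ≠ 0 := by
      rw [← hvq]; exact pow_ne_zero _ hv
    field_simp at H01
    have H2 := H01
    have H3 : (t ^ (2:ℕ) ^ e) ^ 2 * (φm s).1 3 1 = (t ^ (2:ℕ) ^ e) ^ 2 * s ^ (2:ℕ) ^ e := by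
      linear_combination (t ^ (2:ℕ) ^ e) * H2
    exact mul_left_cancel₀ (pow_ne_zero 2 (pow_ne_zero _ ht0)) H3
  have hzero : 2 * (2:ℤ) ^ e - (2:ℤ) ^ (e + 1) = 0 := by ring
  have hc : ∀ r : k, (φm r).1 2 0 = r ^ (2:ℕ) ^ e := by
    intro r
    obtain ⟨t, s, ht0, hv, hr⟩ := reach r
    have H23 := congrFun (congrFun (hrel t s hv) 2) 3
    simp [phiStarV, omegaStarV, Matrix.mul_apply, Fin.sum_univ_four,
      Matrix.diagonal_apply, htri, hb, hdiag, hr, hzero] at H23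
    rw [hzp, div_pow, div_pow, hexp (1+t*s), hexp t, hvq] at H23
    have hVne : ((1:k) + t ^ (2:ℕ) ^ e * s ^ (2:ℕ) ^ e) ≠ 0 := by
      rw [← hvq]; exact pow_ne_zero _ hv
    have hrs : r * (1 + t * s) = s := by
      rw [← hr]; exact div_mul_cancel₀ s hv
    have hrq : r ^ (2:ℕ) ^ e * (1 + t ^ (2:ℕ) ^ e * s ^ (2:ℕ) ^ e) = s ^ (2:ℕ) ^ e := by
      rw [← hvq, ← mul_pow, hrs]
    field_simp at H23
    have key : (φm r).1 2 0 * ((1 + t ^ (2:ℕ) ^ e * s ^ (2:ℕ) ^ e) * ((t ^ (2:ℕ) ^ e) ^ 2 * (1 + t ^ (2:ℕ) ^ e * s ^ (2:ℕ) ^ e) ^ 2)) =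
        r ^ (2:ℕ) ^ e * ((1 + t ^ (2:ℕ) ^ e * s ^ (2:ℕ) ^ e) * ((t ^ (2:ℕ) ^ e) ^ 2 * (1 + t ^ (2:ℕ) ^ e * s ^ (2:ℕ) ^ e) ^ 2)) := by
      linear_combination (-(t ^ (2:ℕ) ^ e) * (1 + t ^ (2:ℕ) ^ e * s ^ (2:ℕ) ^ e) ^ 2) * H23 - (t ^ (2:ℕ) ^ e) ^ 2 * (1 + t ^ (2:ℕ) ^ e * s ^ (2:ℕ) ^ e) ^ 2 * hrq
    exact mul_right_cancel₀ (by
      exact mul_ne_zero hVne (mul_ne_zero (pow_ne_zero _ (pow_ne_zero _ ht0)) (pow_ne_zero _ hVne))) key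
  have hzero2 : (2:ℤ) ^ (e + 1) - 2 * (2:ℤ) ^ e = 0 := by ring
  have hdinv : ∀ (t s : k) (hv : 1 + t * s ≠ 0),
      (φm s).1 2 1 = (φm (s / (1 + t * s))).1 2 1 := by
    intro t s hv
    have H21 := congrFun (congrFun (hrel t s hv) 2) 1
    simp [phiStarV, omegaStarV, Matrix.mul_apply, Fin.sum_univ_four,
      Matrix.diagonal_apply, htri, hb, hdiag, hh, hc, hzero2] at H21
    rw [hzp] at H21
    have hstep : (s/(1+t*s)) ^ (2:ℕ) ^ e * (1+t*s) ^ (2:ℕ) ^ (e+1) * (t/(1+t*s)) ^ (2:ℕ) ^ e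
        = t ^ (2:ℕ) ^ e * s ^ (2:ℕ) ^ e := by
      have hne := pow_ne_zero ((2:ℕ) ^ e) hv
      rw [div_pow, div_pow, hexp (1+t*s)]
      field_simp
    rw [hstep] at H21
    linear_combination H21
  have hd1 : ∀ r : k, r ≠ 0 → (φm r).1 2 1 = (φm 1).1 2 1 := by
    intro r hr0
    have hv : 1 + (r⁻¹ - 1) * 1 ≠ 0 := by
      simpa using inv_ne_zero hr0
    have := hdinv (r⁻¹ - 1) 1 hv
    rw [show (1 : k) / (1 + (r⁻¹ - 1) * 1) = r by field_simp; ring] at this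
    exact this.symm
  have hd0 : (φm 1).1 2 1 = 0 := by
    obtain ⟨x, hx0, hx1⟩ := hne (0:k) 1
    have hx1' : (1:k) + x ≠ 0 := by
      intro h
      apply hx1
      have : x = -1 := by linear_combination h
      rw [this]
      exact (CharTwo.neg_eq 1)
    have HA : (φm (1 + x)).1 = (φm 1).1 * (φm x).1 := by
      rw [hadd]; rfl
    have HA21 := congrFun (congrFun HA 2) 1
    simp [Matrix.mul_apply, Fin.sum_univ_four, htri, hb, hdiag] at HA21
    -- HA21 : d(1+x) = d 1 + d x
    rw [hd1 (1+x) hx1', hd1 x hx0] at HA21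
    -- d1 = d1 + d1
    have h0 : (φm 1).1 2 1 + 0 = (φm 1).1 2 1 + (φm 1).1 2 1 := by
      rw [add_zero]; exact HA21
    exact (add_left_cancel h0).symm
  have hd : ∀ s : k, (φm s).1 2 1 = 0 := by
    intro s
    rcases eq_or_ne s 0 with rfl | hs0
    · rw [hφ0]; simp
    · rw [hd1 s hs0]; exact hd0
  refine ⟨rfl, rfl, ?_⟩
  intro s
  have hg2 : (φm s).1 3 0 = s ^ (2 * 2 ^ e) := by
    rw [hg s]; rw [pow_succ']
  ext i j
  fin_cases i <;> fin_cases j <;>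
    simp [htri, hb, hc, hd, hg2, hh, hm, hdiag]
end

section
/- Let e ≥ 0 and d be integers with p^e ≥ d ≥ 0, and define φ*(t) = I₄ + t^{p^e}·E₁₄ for t ∈ k (the 4×4 identity matrix with the additional entry t^{p^e} in position (1,4)) and ω*(u) = diag(u^{p^e}, u^{d}, u^{−d}, u^{−p^e}) for u ∈ kˣ. Suppose φ⁻ : k → SL(4,k) satisfies: φ⁻(s+s') = φ⁻(s)·φ⁻(s') for all s,s' ∈ k; every matrix entry of φ⁻(s) is a polynomial function of s; φ⁻(s) is lower triangular for every s ∈ k; and φ*(t)·φ⁻(s) = φ⁻(s/(1+t·s)) · ω*(1+t·s) · φ*(t/(1+t·s)) for all t,s ∈ k with 1+t·s ≠ 0. Then d = 0 and φ⁻(s) = I₄ + s^{p^e}·E₄₁ for every s ∈ k (the identity matrix with the additional entry s^{p^e} in position (4,1)). -/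
open Matrix

/-- The unipotent one-parameter subgroup `φ*(t) = I₄ + t^{p^e}·E₁₄` of form (XXIV). -/
noncomputable def phiStarXXIV (k : Type*) [Field k] (q : ℕ) (t : k) :
    Matrix (Fin 4) (Fin 4) k :=
  1 + Matrix.single 0 3 (t ^ q)

/-- The cocharacter `ω*(u) = diag(u^{p^e}, u^{d}, u^{−d}, u^{−p^e})` of form (XXIV). -/
noncomputable def omegaStarXXIV (k : Type*) [Field k] (q : ℕ) (d : ℤ) (u : kˣ) :
    Matrix (Fin 4) (Fin 4) k :=
  Matrix.diagonal ![(u : k) ^ (q : ℤ), (u : k) ^ d, (u : k) ^ (-d), (u : k) ^ (-(q : ℤ))]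

lemma lhs_entry {k : Type*} [Field k] (q : ℕ) (t : k) (M : Matrix (Fin 4) (Fin 4) k)
    (i j : Fin 4) :
    (phiStarXXIV k q t * M) i j = M i j + (if i = 0 then t ^ q * M 3 j else 0) := by
  fin_cases i <;>
    simp [phiStarXXIV, Matrix.add_mul, Matrix.mul_apply, Fin.sum_univ_four, Matrix.single]

lemma rhs_entry {k : Type*} [Field k] (q : ℕ) (d : ℤ) (u : kˣ) (t : k)
    (N : Matrix (Fin 4) (Fin 4) k) (i j : Fin 4) :
    (N * omegaStarXXIV k q d u * phiStarXXIV k q t) i j =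
      N i j * ![(u:k)^(q:ℤ), (u:k)^d, (u:k)^(-d), (u:k)^(-(q:ℤ))] j
        + (if j = 3 then t ^ q * (N i 0 * (u:k)^(q:ℤ)) else 0) := by
  fin_cases j <;>
    (simp [phiStarXXIV, omegaStarXXIV, Matrix.mul_add, Matrix.mul_apply, Fin.sum_univ_four,
      Matrix.single, Matrix.diagonal]; try ring)

/-- **form (XXIV).** If `φ⁻` is an additive lower-triangular one-parameter
subgroup of `SL(4,k)` with polynomial entries satisfying the opposite Bruhat relation
against `φ*`, `ω*` of form (XXIV) (with `p^e ≥ d ≥ 0`), then `d = 0` and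
`φ⁻(s) = I₄ + s^{p^e}·E₄₁`. -/
theorem stmt8 {k : Type*} [Field k] [IsAlgClosed k] {p : ℕ} [Fact p.Prime] [CharP k p]
    (e : ℕ) (d : ℤ) (hd0 : 0 ≤ d) (hd : d ≤ (p : ℤ) ^ e)
    (φm : k → SpecialLinearGroup (Fin 4) k)
    (hadd : ∀ s s' : k, φm (s + s') = φm s * φm s')
    (hpoly : ∀ i j : Fin 4, ∃ P : Polynomial k, ∀ s : k, (φm s).1 i j = P.eval s)
    (htri : ∀ (s : k) (i j : Fin 4), i < j → (φm s).1 i j = 0)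
    (hrel : ∀ (t s : k) (h : 1 + t * s ≠ 0),
      phiStarXXIV k (p ^ e) t * (φm s).1 =
        (φm (s / (1 + t * s))).1 *
          omegaStarXXIV k (p ^ e) d (Units.mk0 (1 + t * s) h) *
          phiStarXXIV k (p ^ e) (t / (1 + t * s))) :
    d = 0 ∧ ∀ s : k, (φm s).1 = 1 + Matrix.single 3 0 (s ^ p ^ e) := by
  classical
  set q : ℕ := p ^ e with hqdef
  -- upper-triangular entries vanish
  have hup01 : ∀ s : k, (φm s).1 0 1 = 0 := fun s => htri s 0 1 (by decide)
  have hup02 : ∀ s : k, (φm s).1 0 2 = 0 := fun s => htri s 0 2 (by decide)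
  have hup03 : ∀ s : k, (φm s).1 0 3 = 0 := fun s => htri s 0 3 (by decide)
  have hup12 : ∀ s : k, (φm s).1 1 2 = 0 := fun s => htri s 1 2 (by decide)
  have hup13 : ∀ s : k, (φm s).1 1 3 = 0 := fun s => htri s 1 3 (by decide)
  have hup23 : ∀ s : k, (φm s).1 2 3 = 0 := fun s => htri s 2 3 (by decide)
  have hmul : ∀ s s' : k, (φm (s + s')).1 = (φm s).1 * (φm s').1 := by
    intro s s'; rw [hadd]; rfl
  -- φm 0 = 1
  have h0 : (φm 0).1 = 1 := by
    have h := hadd 0 0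
    rw [add_zero] at h
    have h1 : φm 0 = 1 := (mul_eq_left (a := φm 0)).mp h.symm
    rw [h1]; rfl
  -- diagonal entries are 1
  have hdiag : ∀ (i : Fin 4) (s : k), (φm s).1 i i = 1 := by
    intro i
    have hmulf : ∀ s s' : k, (φm (s + s')).1 i i = (φm s).1 i i * (φm s').1 i i := by
      intro s s'
      fin_cases i <;>
        simp [hmul, Matrix.mul_apply, Fin.sum_univ_four,
          hup01, hup02, hup03, hup12, hup13, hup23]
    have hone : (φm 0).1 i i = 1 := by rw [h0]; exact Matrix.one_apply_eq i
    have hne : ∀ s : k, (φm s).1 i i ≠ 0 := by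
      intro s hzero
      have h1 := hmulf s (-s)
      rw [add_neg_cancel, hone, hzero, zero_mul] at h1
      exact one_ne_zero h1
    obtain ⟨P, hP⟩ := hpoly i i
    have hdeg : P.degree ≤ 0 := by
      by_contra hgt
      obtain ⟨x, hx⟩ := IsAlgClosed.exists_root P (by
        intro hz
        exact absurd hz (ne_of_gt (lt_of_not_ge hgt)))
      exact hne x (by rw [hP]; exact hx)
    intro s
    have hC : P = Polynomial.C (P.coeff 0) := Polynomial.eq_C_of_degree_le_zero hdeg
    have h1 : P.eval 0 = 1 := by rw [← hP 0]; exact hone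
    rw [hP s, hC, Polynomial.eval_C]
    rw [hC, Polynomial.eval_C] at h1
    exact h1
  -- existence of good parameters
  have hts : ∀ s : k, ∃ t : k, t ≠ 0 ∧ 1 + t * s ≠ 0 := by
    intro s
    obtain ⟨t, ht⟩ := Infinite.exists_notMem_finset ({0, -s⁻¹} : Finset k)
    simp only [Finset.mem_insert, Finset.mem_singleton, not_or] at ht
    refine ⟨t, ht.1, fun hc => ht.2 ?_⟩
    have hs : s ≠ 0 := by rintro rfl; simp at hc
    have h1 : t * s = -1 := by linear_combination hc
    field_simp
    linear_combination h1
  -- entry (3,0) is s^q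
  have hA30 : ∀ s : k, (φm s).1 3 0 = s ^ q := by
    intro s
    obtain ⟨t, ht0, htu⟩ := hts s
    have h := congrFun (congrFun (hrel t s htu) 0) 0
    rw [lhs_entry, rhs_entry] at h
    simp only [eq_self_iff_true, if_true, if_neg (by decide : (0 : Fin 4) ≠ 3), add_zero,
      Matrix.cons_val_zero, Units.val_mk0, zpow_natCast, hdiag, one_mul] at h
    have hexp : (1 + t * s) ^ q = 1 + t ^ q * s ^ q := by
      rw [hqdef, add_pow_char_pow, one_pow, mul_pow]
    have h2 : t ^ q * (φm s).1 3 0 = t ^ q * s ^ q := by linear_combination h + hexp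
    exact mul_left_cancel₀ (pow_ne_zero q ht0) h2
  -- entries (3,1), (3,2) vanish
  have hA31 : ∀ s : k, (φm s).1 3 1 = 0 := by
    intro s
    obtain ⟨t, ht0, htu⟩ := hts s
    have h := congrFun (congrFun (hrel t s htu) 0) 1
    rw [lhs_entry, rhs_entry] at h
    simp only [eq_self_iff_true, if_true, if_neg (by decide : (1 : Fin 4) ≠ 3), add_zero,
      Matrix.cons_val_one, Matrix.head_cons, hup01, zero_mul, zero_add] at h
    have h2 : t ^ q * (φm s).1 3 1 = t ^ q * 0 := by linear_combination h
    exact mul_left_cancel₀ (pow_ne_zero q ht0) h2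
  have hA32 : ∀ s : k, (φm s).1 3 2 = 0 := by
    intro s
    obtain ⟨t, ht0, htu⟩ := hts s
    have h := congrFun (congrFun (hrel t s htu) 0) 2
    rw [lhs_entry, rhs_entry] at h
    simp only [eq_self_iff_true, if_true, if_neg (by decide : (2 : Fin 4) ≠ 3), add_zero,
      hup02, zero_mul, zero_add] at h
    have h2 : t ^ q * (φm s).1 3 2 = t ^ q * 0 := by linear_combination h
    exact mul_left_cancel₀ (pow_ne_zero q ht0) h2
  -- d = 0
  have hud : ∀ v : k, v ≠ 0 → v ^ d = 1 := by
    intro v hv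
    have hu : (1 : k) + (v - 1) * 1 ≠ 0 := by
      intro hc; exact hv (by linear_combination hc)
    have h := congrFun (congrFun (hrel (v - 1) 1 hu) 1) 1
    rw [lhs_entry, rhs_entry] at h
    simp only [if_neg (by decide : (1 : Fin 4) ≠ 0), if_neg (by decide : (1 : Fin 4) ≠ 3),
      add_zero, Matrix.cons_val_one, Matrix.head_cons, Units.val_mk0, hdiag, one_mul] at h
    have hv1 : (1 : k) + (v - 1) * 1 = v := by ring
    rw [hv1] at h
    exact h.symm
  have hdzero : d = 0 := by
    by_contra hne
    have hn : d.toNat ≠ 0 := by omega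
    have hroots : ∀ v : k, v ≠ 0 → v ^ d.toNat = 1 := by
      intro v hv
      have := hud v hv
      rwa [← Int.toNat_of_nonneg hd0, zpow_natCast] at this
    have hzero : (Polynomial.X ^ d.toNat - Polynomial.C 1 : Polynomial k) = 0 := by
      apply Polynomial.eq_zero_of_infinite_isRoot
      have hinf : ({0}ᶜ : Set k).Infinite :=
        Set.Finite.infinite_compl (Set.finite_singleton 0)
      refine hinf.mono ?_
      intro x hx
      have hx0 : x ≠ 0 := by simpa using hx
      simp [Polynomial.IsRoot, hroots x hx0]
    have := congrArg (fun P => Polynomial.coeff P d.toNat) hzero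
    simp [Polynomial.coeff_X_pow, Polynomial.coeff_one, hn] at this
  subst hdzero
  -- entries (1,0), (2,0) vanish
  have hA10 : ∀ r : k, (φm r).1 1 0 = 0 := by
    intro r
    by_cases hr : r = 0
    · rw [hr, h0]; simp [Matrix.one_apply]
    obtain ⟨t, ht0, htc⟩ := hts (-r)
    have hc : (1 : k) - t * r ≠ 0 := by
      intro hc0; apply htc; linear_combination hc0
    set c : k := 1 - t * r with hcdef
    have hu1 : (1 : k) + t * (r / c) = 1 / c := by field_simp; ring
    have hu : (1 : k) + t * (r / c) ≠ 0 := by rw [hu1]; exact one_div_ne_zero hc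
    have hs' : (r / c) / (1 + t * (r / c)) = r := by
      rw [hu1]; field_simp
    have h := congrFun (congrFun (hrel t (r / c) hu) 1) 3
    rw [lhs_entry, rhs_entry] at h
    simp only [eq_self_iff_true, if_true, if_neg (by decide : (1 : Fin 4) ≠ 0), add_zero,
      Units.val_mk0, zpow_natCast, hs', hup13, zero_mul, zero_add] at h
    have htq : (t / (1 + t * (r / c))) ^ q ≠ 0 :=
      pow_ne_zero q (div_ne_zero ht0 hu)
    have huq : ((1 : k) + t * (r / c)) ^ q ≠ 0 := pow_ne_zero q hu
    have h2 : (t / (1 + t * (r / c))) ^ q * ((φm r).1 1 0 * (1 + t * (r / c)) ^ q) = 0 := by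
      linear_combination -h
    rcases mul_eq_zero.mp h2 with h3 | h3
    · exact absurd h3 htq
    rcases mul_eq_zero.mp h3 with h4 | h4
    · exact h4
    · exact absurd h4 huq
  have hA20 : ∀ r : k, (φm r).1 2 0 = 0 := by
    intro r
    by_cases hr : r = 0
    · rw [hr, h0]; simp [Matrix.one_apply]
    obtain ⟨t, ht0, htc⟩ := hts (-r)
    have hc : (1 : k) - t * r ≠ 0 := by
      intro hc0; apply htc; linear_combination hc0
    set c : k := 1 - t * r with hcdef
    have hu1 : (1 : k) + t * (r / c) = 1 / c := by field_simp; ring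
    have hu : (1 : k) + t * (r / c) ≠ 0 := by rw [hu1]; exact one_div_ne_zero hc
    have hs' : (r / c) / (1 + t * (r / c)) = r := by
      rw [hu1]; field_simp
    have h := congrFun (congrFun (hrel t (r / c) hu) 2) 3
    rw [lhs_entry, rhs_entry] at h
    simp only [eq_self_iff_true, if_true, if_neg (by decide : (2 : Fin 4) ≠ 0), add_zero,
      Units.val_mk0, zpow_natCast, hs', hup23, zero_mul, zero_add] at h
    have htq : (t / (1 + t * (r / c))) ^ q ≠ 0 :=
      pow_ne_zero q (div_ne_zero ht0 hu)
    have huq : ((1 : k) + t * (r / c)) ^ q ≠ 0 := pow_ne_zero q hu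
    have h2 : (t / (1 + t * (r / c))) ^ q * ((φm r).1 2 0 * (1 + t * (r / c)) ^ q) = 0 := by
      linear_combination -h
    rcases mul_eq_zero.mp h2 with h3 | h3
    · exact absurd h3 htq
    rcases mul_eq_zero.mp h3 with h4 | h4
    · exact h4
    · exact absurd h4 huq
  -- entry (2,1) vanishes
  have hA21const : ∀ v : k, v ≠ 0 → (φm v).1 2 1 = (φm 1).1 2 1 := by
    intro v hv
    have hu : (1 : k) + (v⁻¹ - 1) * 1 ≠ 0 := by
      intro hc
      exact (inv_ne_zero hv) (by linear_combination hc)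
    have h := congrFun (congrFun (hrel (v⁻¹ - 1) 1 hu) 2) 1
    rw [lhs_entry, rhs_entry] at h
    simp only [if_neg (by decide : (2 : Fin 4) ≠ 0), if_neg (by decide : (1 : Fin 4) ≠ 3),
      add_zero, Matrix.cons_val_one, Matrix.head_cons, Matrix.cons_val_zero, Units.val_mk0, zpow_zero, mul_one] at h
    have hw : (1 : k) + (v⁻¹ - 1) = v⁻¹ := by ring
    rw [hw, one_div, inv_inv] at h
    exact h.symm
  have hA21 : ∀ r : k, (φm r).1 2 1 = 0 := by
    have h10 : (φm 1).1 2 1 = 0 := by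
      obtain ⟨P, hP⟩ := hpoly 2 1
      have hzero : P - Polynomial.C ((φm 1).1 2 1) = 0 := by
        apply Polynomial.eq_zero_of_infinite_isRoot
        have hinf : ({0}ᶜ : Set k).Infinite :=
          Set.Finite.infinite_compl (Set.finite_singleton 0)
        refine hinf.mono ?_
        intro x hx
        have hx0 : x ≠ 0 := by simpa using hx
        simp [Polynomial.IsRoot, ← hP, hA21const x hx0]
      have hP0 : P.eval 0 = (φm 1).1 2 1 := by
        have := congrArg (fun Q => Polynomial.eval 0 Q) hzero
        simpa [sub_eq_zero] using this
      have hA0 : (φm 0).1 2 1 = 0 := by rw [h0]; simp [Matrix.one_apply]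
      rw [hP 0, hP0] at hA0
      exact hA0
    intro r
    by_cases hr : r = 0
    · rw [hr, h0]; simp [Matrix.one_apply]
    · rw [hA21const r hr, h10]
  -- assemble
  refine ⟨rfl, ?_⟩
  intro s
  ext i j
  fin_cases i <;> fin_cases j <;>
    simp [Matrix.add_apply, Matrix.one_apply, Matrix.single, hdiag,
      hup01 s, hup02 s, hup03 s, hup12 s, hup13 s, hup23 s,
      hA30 s, hA31 s, hA32 s, hA10 s, hA20 s, hA21 s]
end
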